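/- Let C be an [n,k,n-k+1] MDS code over F_{q^m} and B a basis of F_{q^m} over F_q. Extend each length-m block of Φ_B by an overall parity check (appending the negative of the sum of the m coordinates in that block). The resulting code over F_q has length (m+1)n, dimension mk, and minimum distance at least 2(n-k+1). -/

import Mathlib

/-- Coordinatewise expansion in a basis, with an overall parity check appended to
each length-`m` block. -/
noncomputable def expandExt {K L : Type*} [Field K] [Field L] [Algebra K L] {m n : ℕ}
    (B : Module.Basis (Fin m) K L) (x : Fin n → L) : Fin n × Fin (m + 1) → K :=
  fun p => if h : (p.2 : ℕ) < m then B.repr (x p.1) ⟨p.2, h⟩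
           else -(∑ j, B.repr (x p.1) j)

section aux

variable {K L : Type*} [Field K] [Field L] [Algebra K L] {m n : ℕ}

/-- `expandExt` as a `K`-linear map. -/
noncomputable def expandExtLin (B : Module.Basis (Fin m) K L) :
    (Fin n → L) →ₗ[K] (Fin n × Fin (m + 1) → K) where
  toFun x := fun p => if h : (p.2 : ℕ) < m then B.repr (x p.1) ⟨p.2, h⟩
           else -(∑ j, B.repr (x p.1) j)
  map_add' x y := by
    funext p
    by_cases h : (p.2 : ℕ) < m <;> simp [h, Finset.sum_add_distrib, neg_add] <;> ring
  map_smul' a x := by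
    funext p
    by_cases h : (p.2 : ℕ) < m <;> simp [h, Finset.mul_sum, mul_neg]

lemma expandExtLin_apply (B : Module.Basis (Fin m) K L) (x : Fin n → L) :
    expandExtLin B x = expandExt B x := rfl

lemma expandExtLin_injective (B : Module.Basis (Fin m) K L) :
    Function.Injective (expandExtLin (n := n) B) := by
  rw [← LinearMap.ker_eq_bot]
  ext x
  simp only [LinearMap.mem_ker, Submodule.mem_bot]
  constructor
  · intro h
    funext i
    have hx : B.repr (x i) = 0 := by
      ext j
      have := congrFun h (i, Fin.castSucc j)
      simpa [expandExtLin, j.isLt] using this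
    have := congrArg B.repr.symm hx
    simpa using this
  · rintro rfl; simp

/-- Hamming norm decomposes over blocks. -/
lemma hammingNorm_prod (v : Fin n × Fin (m + 1) → K) [DecidableEq K] :
    hammingNorm v = ∑ i, hammingNorm (fun j => v (i, j)) := by
  classical
  simp only [hammingNorm]
  rw [← Fintype.card_subtype]
  have e : {p : Fin n × Fin (m+1) // v p ≠ 0} ≃ Σ i : Fin n, {j // v (i, j) ≠ 0} :=
    { toFun := fun q => ⟨q.1.1, ⟨q.1.2, q.2⟩⟩
      invFun := fun q => ⟨(q.1, q.2.1), q.2.2⟩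
      left_inv := fun q => rfl
      right_inv := fun q => rfl }
  rw [Fintype.card_congr e, Fintype.card_sigma]
  congr 1
  funext i
  rw [Fintype.card_subtype]

lemma two_le_block (B : Module.Basis (Fin m) K L) [DecidableEq K] (x : Fin n → L) (i : Fin n)
    (hx : x i ≠ 0) : 2 ≤ hammingNorm (fun j => expandExt B x (i, j)) := by
  classical
  have hc : B.repr (x i) ≠ 0 := by
    intro h
    apply hx
    have := congrArg B.repr.symm h
    simpa using this
  obtain ⟨j0, hj0⟩ : ∃ j, B.repr (x i) j ≠ 0 := by
    by_contra h
    push_neg at h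
    exact hc (Finsupp.ext h)
  have key : ∃ a b : Fin (m+1), a ≠ b ∧ expandExt B x (i, a) ≠ 0 ∧ expandExt B x (i, b) ≠ 0 := by
    by_cases hs : (∑ j, B.repr (x i) j) = 0
    · -- two nonzero coordinates among the first m
      obtain ⟨j1, hj1, hne⟩ : ∃ j1, B.repr (x i) j1 ≠ 0 ∧ j1 ≠ j0 := by
        by_contra h
        push_neg at h
        apply hj0
        have : ∑ j, B.repr (x i) j = B.repr (x i) j0 := by
          apply Finset.sum_eq_single
          · intro b _ hb
            by_contra hb'
            exact hb (h b hb')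
          · simp
        rw [this] at hs
        exact hs
      refine ⟨Fin.castSucc j0, Fin.castSucc j1, ?_, ?_, ?_⟩
      · simpa [Fin.castSucc_inj] using (Ne.symm hne)
      · simpa [expandExt, j0.isLt] using hj0
      · simpa [expandExt, j1.isLt] using hj1
    · refine ⟨Fin.castSucc j0, Fin.last m, ?_, ?_, ?_⟩
      · exact Fin.ne_of_lt (Fin.castSucc_lt_last j0)
      · simpa [expandExt, j0.isLt] using hj0
      · simpa [expandExt] using hs
  obtain ⟨a, b, hab, ha, hb⟩ := key
  rw [hammingNorm]
  have : ({a, b} : Finset (Fin (m+1))) ⊆ Finset.univ.filter fun j => expandExt B x (i, j) ≠ 0 := by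
    intro c hc
    simp only [Finset.mem_insert, Finset.mem_singleton] at hc
    rcases hc with rfl | rfl <;> simp [ha, hb]
  calc 2 = ({a, b} : Finset (Fin (m+1))).card := by rw [Finset.card_insert_of_notMem (by simpa using hab), Finset.card_singleton]
    _ ≤ _ := Finset.card_le_card this

end aux

/-- expanding an `[n,k,n-k+1]` MDS code over `F_{q^m}` in a basis and
appending a parity check to each block gives an `[(m+1)n, mk]` code over `F_q` with
minimum distance at least `2(n-k+1)`. -/
theorem stmt3 (K L : Type) [Field K] [Field L] [Algebra K L] [Fintype K] [Fintype L]
    [DecidableEq K] [DecidableEq L]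
    (m n k : ℕ) (hm : 0 < m) (hkn : k ≤ n) (hdim : Module.finrank K L = m)
    (B : Module.Basis (Fin m) K L) (C : Submodule L (Fin n → L))
    (hk : Module.finrank L C = k)
    (hd : ∀ x ∈ C, x ≠ 0 → n - k + 1 ≤ hammingNorm x) :
    ∃ D : Submodule K (Fin n × Fin (m + 1) → K),
      (D : Set (Fin n × Fin (m + 1) → K)) = expandExt B '' (C : Set (Fin n → L)) ∧
      Module.finrank K D = m * k ∧
      ∀ v ∈ D, v ≠ 0 → 2 * (n - k + 1) ≤ hammingNorm v := by
  classical
  refine ⟨(C.restrictScalars K).map (expandExtLin B), ?_, ?_, ?_⟩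
  · simp [Submodule.map_coe, expandExtLin_apply]; rfl
  · rw [(Submodule.equivMapOfInjective _ (expandExtLin_injective B) (C.restrictScalars K)).symm.finrank_eq]
    have : Module.finrank K (C.restrictScalars K) = Module.finrank K L * Module.finrank L C :=
      (Module.finrank_mul_finrank K L C).symm
    rw [this, hdim, hk]
  · rintro v hv hv0
    obtain ⟨x, hxC, rfl⟩ := Submodule.mem_map.mp hv
    have hx0 : x ≠ 0 := by rintro rfl; simp at hv0
    rw [expandExtLin_apply, hammingNorm_prod]
    have hle : n - k + 1 ≤ hammingNorm x := hd x hxC hx0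
    calc 2 * (n - k + 1) ≤ 2 * hammingNorm x := by omega
      _ = ∑ i ∈ Finset.univ.filter (fun i => x i ≠ 0), 2 := by
          rw [Finset.sum_const, smul_eq_mul, hammingNorm, mul_comm]
      _ ≤ ∑ i ∈ Finset.univ.filter (fun i => x i ≠ 0),
            hammingNorm (fun j => expandExt B x (i, j)) := by
          apply Finset.sum_le_sum
          intro i hi
          exact two_le_block B x i (by simpa using hi)
      _ ≤ ∑ i, hammingNorm (fun j => expandExt B x (i, j)) :=
          Finset.sum_le_sum_of_subset (Finset.filter_subset _ _)
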